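/- arXiv:1403.7058 — 4 statements merged into one kernel-verified Lean document; each statement's English description precedes it below -/
import Mathlib

section
/- Fix c ∈ (0, 1) and let t be a positive even integer with t/2 even and with the following nondegeneracy: for every x ∈ D both sets {y ∈ D : Δ(x,y) ≥ t/2 + c√t} and {y ∈ D : Δ(x,y) ≤ t/2 − c√t} are nonempty, where D := {x ∈ {0,1}^t : wt(x) = t/2}. Define g(S,T) := 1 if Δ(S,T) > t/2 and 0 otherwise; define f_c(S,T) := 1 if Δ(S,T) ≥ t/2 + c√t and f_c(S,T) := 0 if Δ(S,T) ≤ t/2 − c√t. Let ζ be the uniform distribution on D × D, and let μ be the distribution on D × D in which S is uniform on D, and then with probability 1/2 the string T is uniform on {y ∈ D : Δ(S,y) ≥ t/2 + c√t} and with probability 1/2 uniform on {y ∈ D : Δ(S,y) ≤ t/2 − c√t}. Let q := Pr_{(S,T)∼ζ}[t/2 − c√t < Δ(S,T) < t/2 + c√t]. Then for every finite probability space (Ω, p), every finite message type Σ, every message function M : D × Ω → Σ, every reconstruction function R : Σ × D → {0,1}, and every δ ∈ [0,1]: if Pr_{(S,T)∼μ, ω∼p}[R(M(S,ω), T) = f_c(S,T)]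 ≥ 1 − δ, then Pr_{(S,T)∼ζ, ω∼p}[R(M(S,ω), T) = g(S,T)] ≥ (1 − δ)·(1 − q). -/
open Finset

attribute [local instance] Classical.propDecidable

/-- The set `D` of bit strings of length `t` with Hamming weight exactly `t/2`. -/
abbrev BalStr (t : ℕ) := {x : Fin t → Bool // (Finset.univ.filter (fun i => x i = true)).card = t / 2}

/-- The strings of `D` at Hamming distance `≥ t/2 + c√t` from `S`. -/
noncomputable def FarB (t : ℕ) (c : ℝ) (S : BalStr t) : Finset (BalStr t) :=
  Finset.univ.filter (fun T => (t : ℝ) / 2 + c * Real.sqrt t ≤ (hammingDist S.1 T.1 : ℝ))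

/-- The strings of `D` at Hamming distance `≤ t/2 − c√t` from `S`. -/
noncomputable def NearB (t : ℕ) (c : ℝ) (S : BalStr t) : Finset (BalStr t) :=
  Finset.univ.filter (fun T => (hammingDist S.1 T.1 : ℝ) ≤ (t : ℝ) / 2 - c * Real.sqrt t)

/-- The density of the distribution `μ`: `S` uniform on `D`; given `S`, with probability `1/2`
the string `T` is uniform on `FarB S` and with probability `1/2` uniform on `NearB S`. -/
noncomputable def muDens (t : ℕ) (c : ℝ) (S T : BalStr t) : ℝ :=
  (1 / (Fintype.card (BalStr t) : ℝ)) *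
    ((1 / 2) * (if T ∈ FarB t c S then (1 : ℝ) / ((FarB t c S).card : ℝ) else 0) +
     (1 / 2) * (if T ∈ NearB t c S then (1 : ℝ) / ((NearB t c S).card : ℝ) else 0))

noncomputable def GapB (t : ℕ) (c : ℝ) (S : BalStr t) : Finset (BalStr t) :=
  Finset.univ.filter (fun T => (t : ℝ) / 2 - c * Real.sqrt t < (hammingDist S.1 T.1 : ℝ) ∧
    (hammingDist S.1 T.1 : ℝ) < (t : ℝ) / 2 + c * Real.sqrt t)

lemma hd_perm {t : ℕ} (π : Equiv.Perm (Fin t)) (x y : Fin t → Bool) :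
    hammingDist (x ∘ π) (y ∘ π) = hammingDist x y := by
  simp only [hammingDist]
  exact Finset.card_equiv π (fun i => by simp [Function.comp])

lemma wt_perm {t : ℕ} (π : Equiv.Perm (Fin t)) (x : Fin t → Bool) :
    (Finset.univ.filter (fun i => (x ∘ π) i = true)).card
      = (Finset.univ.filter (fun i => x i = true)).card :=
  Finset.card_equiv π (fun i => by simp [Function.comp])

noncomputable def permBal {t : ℕ} (π : Equiv.Perm (Fin t)) (T : BalStr t) : BalStr t :=
  ⟨T.1 ∘ π, (wt_perm π T.1).trans T.2⟩

noncomputable def permBalEquiv {t : ℕ} (π : Equiv.Perm (Fin t)) : BalStr t ≃ BalStr t where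
  toFun := permBal π
  invFun := permBal π⁻¹
  left_inv T := by
    apply Subtype.ext; funext i; simp [permBal, Function.comp]
  right_inv T := by
    apply Subtype.ext; funext i; simp [permBal, Function.comp]

lemma card_dist_perm {t : ℕ} (P : ℕ → Prop) (π : Equiv.Perm (Fin t)) (S : BalStr t) :
    (Finset.univ.filter (fun T : BalStr t => P (hammingDist (S.1 ∘ π) T.1))).card
      = (Finset.univ.filter (fun T : BalStr t => P (hammingDist S.1 T.1))).card := by
  refine Finset.card_equiv (permBalEquiv π⁻¹) (fun T => ?_)
  simp only [Finset.mem_filter, Finset.mem_univ, true_and, permBalEquiv, Equiv.coe_fn_mk,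
    permBal]
  have h2 : (S.1 ∘ π) ∘ ⇑π⁻¹ = S.1 := by funext i; simp
  have h3 : hammingDist S.1 (T.1 ∘ ⇑π⁻¹) = hammingDist (S.1 ∘ π) T.1 := by
    conv_lhs => rw [← h2]
    exact hd_perm π⁻¹ (S.1 ∘ π) T.1
  rw [h3]

lemma exists_perm {t : ℕ} (S S' : BalStr t) : ∃ π : Equiv.Perm (Fin t), S.1 ∘ π = S'.1 := by
  have h1 : Fintype.card {i // S'.1 i = true} = Fintype.card {i // S.1 i = true} := by
    rw [Fintype.card_subtype, Fintype.card_subtype, S.2, S'.2]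
  have h0 : Fintype.card {i // ¬ S'.1 i = true} = Fintype.card {i // ¬ S.1 i = true} := by
    rw [Fintype.card_subtype_compl, Fintype.card_subtype_compl, h1]
  set e := Fintype.equivOfCardEq h1 with he
  set f := Fintype.equivOfCardEq h0 with hf
  refine ⟨Equiv.subtypeCongr e f, funext fun i => ?_⟩
  by_cases h : S'.1 i = true
  · have hm := (e ⟨i, h⟩).2
    simp only [Function.comp_apply, Equiv.subtypeCongr, Equiv.trans_apply,
      Equiv.sumCongr_apply, Equiv.sumCompl, Equiv.coe_fn_mk, Equiv.coe_fn_symm_mk,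
      dif_pos h, Sum.map_inl, Sum.elim_inl]
    rw [hm, h]
  · have hm := (f ⟨i, h⟩).2
    simp only [Function.comp_apply, Equiv.subtypeCongr, Equiv.trans_apply,
      Equiv.sumCongr_apply, Equiv.sumCompl, Equiv.coe_fn_mk, Equiv.coe_fn_symm_mk,
      dif_neg h, Sum.map_inr, Sum.elim_inr]
    simp only [Bool.not_eq_true] at hm h
    rw [hm, h]

lemma card_dist_congr {t : ℕ} (P : ℕ → Prop) (S S' : BalStr t) :
    (Finset.univ.filter (fun T : BalStr t => P (hammingDist S.1 T.1))).card
      = (Finset.univ.filter (fun T : BalStr t => P (hammingDist S'.1 T.1))).card := by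
  obtain ⟨π, hπ⟩ := exists_perm S S'
  rw [← hπ]
  exact (card_dist_perm P π S).symm

lemma wt_compl {t : ℕ} (h2 : 2 ∣ t) (T : BalStr t) :
    (Finset.univ.filter (fun i => (!T.1 i) = true)).card = t / 2 := by
  have he : (Finset.univ.filter (fun i => (!T.1 i) = true))
      = Finset.univ.filter (fun i => ¬ (T.1 i = true)) := by
    apply Finset.filter_congr; intro i _; simp
  have hc := Finset.card_filter_add_card_filter_not
    (s := (Finset.univ : Finset (Fin t))) (p := fun i => T.1 i = true)
  have hu : (Finset.univ : Finset (Fin t)).card = t := by simp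
  have hw := T.2
  rw [he]
  omega

lemma hd_compl {t : ℕ} (x y : Fin t → Bool) :
    hammingDist x (fun i => !y i) = t - hammingDist x y := by
  simp only [hammingDist]
  have he : (Finset.univ.filter (fun i => x i ≠ !(y i)))
      = Finset.univ.filter (fun i => ¬ (x i ≠ y i)) := by
    apply Finset.filter_congr; intro i _
    cases hx : x i <;> cases hy : y i <;> simp
  have hc := Finset.card_filter_add_card_filter_not
    (s := (Finset.univ : Finset (Fin t))) (p := fun i => x i ≠ y i)
  have hu : (Finset.univ : Finset (Fin t)).card = t := by simp
  rw [show (Finset.univ.filter (fun i => x i ≠ (fun i => !y i) i)) =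
    Finset.univ.filter (fun i => ¬ (x i ≠ y i)) from he]
  omega

noncomputable def complBal {t : ℕ} (h2 : 2 ∣ t) (T : BalStr t) : BalStr t :=
  ⟨fun i => !T.1 i, wt_compl h2 T⟩

lemma hd_le {t : ℕ} (x y : Fin t → Bool) : hammingDist x y ≤ t := by
  have := hammingDist_le_card_fintype (x := x) (y := y)
  simpa using this

lemma far_card_eq_near {t : ℕ} (c : ℝ) (h2 : 2 ∣ t) (S : BalStr t) :
    (FarB t c S).card = (NearB t c S).card := by
  refine Finset.card_nbij' (complBal h2) (complBal h2) ?_ ?_ ?_ ?_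
  · intro T hT
    simp only [FarB, Finset.mem_coe, Finset.mem_filter, Finset.mem_univ, true_and] at hT
    simp only [NearB, Finset.mem_coe, Finset.mem_filter, Finset.mem_univ, true_and, complBal]
    rw [hd_compl S.1 T.1]
    have hle := hd_le S.1 T.1
    push_cast [Nat.cast_sub hle]
    linarith
  · intro T hT
    simp only [NearB, Finset.mem_coe, Finset.mem_filter, Finset.mem_univ, true_and] at hT
    simp only [FarB, Finset.mem_coe, Finset.mem_filter, Finset.mem_univ, true_and, complBal]
    rw [hd_compl S.1 T.1]
    have hle := hd_le S.1 T.1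
    push_cast [Nat.cast_sub hle]
    linarith
  · intro T _
    apply Subtype.ext; funext i; simp [complBal]
  · intro T _
    apply Subtype.ext; funext i; simp [complBal]

lemma partitionB {t : ℕ} {c : ℝ} (ht : 0 < t) (hc0 : 0 < c) (S : BalStr t) :
    (FarB t c S).card + (NearB t c S).card + (GapB t c S).card = Fintype.card (BalStr t) := by
  have hst : (0:ℝ) < c * Real.sqrt t :=
    mul_pos hc0 (Real.sqrt_pos.mpr (by exact_mod_cast ht))
  have h1 := Finset.card_filter_add_card_filter_not
    (s := (Finset.univ : Finset (BalStr t)))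
    (p := fun T => (t : ℝ) / 2 + c * Real.sqrt t ≤ (hammingDist S.1 T.1 : ℝ))
  have h2 := Finset.card_filter_add_card_filter_not
    (s := Finset.univ.filter (fun T : BalStr t =>
      ¬ ((t : ℝ) / 2 + c * Real.sqrt t ≤ (hammingDist S.1 T.1 : ℝ))))
    (p := fun T => (hammingDist S.1 T.1 : ℝ) ≤ (t : ℝ) / 2 - c * Real.sqrt t)
  rw [Finset.filter_filter, Finset.filter_filter] at h2
  have hN : (Finset.univ.filter (fun T : BalStr t =>
      ¬ ((t : ℝ) / 2 + c * Real.sqrt t ≤ (hammingDist S.1 T.1 : ℝ)) ∧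
        (hammingDist S.1 T.1 : ℝ) ≤ (t : ℝ) / 2 - c * Real.sqrt t)) = NearB t c S := by
    apply Finset.filter_congr; intro T _
    constructor
    · exact fun h => h.2
    · intro h; exact ⟨by push_neg; linarith, h⟩
  have hG : (Finset.univ.filter (fun T : BalStr t =>
      ¬ ((t : ℝ) / 2 + c * Real.sqrt t ≤ (hammingDist S.1 T.1 : ℝ)) ∧
        ¬ ((hammingDist S.1 T.1 : ℝ) ≤ (t : ℝ) / 2 - c * Real.sqrt t))) = GapB t c S := by
    apply Finset.filter_congr; intro T _
    constructor
    · intro h; push_neg at h; exact ⟨h.2, h.1⟩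
    · intro h; exact ⟨by push_neg; exact h.2, by push_neg; exact h.1⟩
  rw [hN, hG] at h2
  have hu : (Finset.univ : Finset (BalStr t)).card = Fintype.card (BalStr t) :=
    Finset.card_univ
  rw [hu] at h1
  show (FarB t c S).card + _ + _ = _
  simp only [FarB]
  omega
lemma pair_count {t : ℕ} {c : ℝ} (S : BalStr t) :
    (Finset.univ.filter (fun q : BalStr t × BalStr t =>
        (t : ℝ) / 2 - c * Real.sqrt t < (hammingDist q.1.1 q.2.1 : ℝ) ∧
        (hammingDist q.1.1 q.2.1 : ℝ) < (t : ℝ) / 2 + c * Real.sqrt t)).card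
      = Fintype.card (BalStr t) * (GapB t c S).card := by
  rw [Finset.card_filter, ← Finset.univ_product_univ, Finset.sum_product]
  have hx : ∀ S' : BalStr t,
      (∑ T : BalStr t, if ((t : ℝ) / 2 - c * Real.sqrt t < (hammingDist S'.1 T.1 : ℝ) ∧
          (hammingDist S'.1 T.1 : ℝ) < (t : ℝ) / 2 + c * Real.sqrt t) then 1 else 0)
        = (GapB t c S).card := by
    intro S'
    rw [← Finset.card_filter]
    convert card_dist_congr (fun d => (t : ℝ) / 2 - c * Real.sqrt t < (d : ℝ) ∧
      (d : ℝ) < (t : ℝ) / 2 + c * Real.sqrt t) S' S using 2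
    · congr
    · simp only [GapB]; congr
  rw [Finset.sum_congr rfl (fun S' _ => hx S')]
  simp [Finset.card_univ, mul_comm]

/-- If a one-way protocol `(M, R)` errs with probability at most `δ` for the gap problem `f_c`
under `μ`, then it errs with probability at most `1 − (1−δ)(1−q)` for the threshold problem `g`
under the uniform distribution `ζ` on `D × D`, where `q` is the `ζ`-probability of the gap
region `t/2 − c√t < Δ < t/2 + c√t`. -/
theorem mu_to_zeta_reduction (c : ℝ) (hc0 : 0 < c) (hc1 : c < 1)
    (t : ℕ) (ht : 0 < t) (ht4 : 4 ∣ t)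
    (hnd : ∀ S : BalStr t, (FarB t c S).Nonempty ∧ (NearB t c S).Nonempty)
    (Ω : Type) [Fintype Ω] (p : Ω → ℝ) (hp : ∀ ω, 0 ≤ p ω) (hp1 : (∑ ω, p ω) = 1)
    (σ : Type) [Fintype σ] (M : BalStr t → Ω → σ) (R : σ → BalStr t → Bool)
    (δ : ℝ) (hδ0 : 0 ≤ δ) (hδ1 : δ ≤ 1)
    (hsucc : 1 - δ ≤ ∑ S : BalStr t, ∑ T : BalStr t, ∑ ω : Ω,
      muDens t c S T * p ω *
        (if R (M S ω) T =
            (if (t : ℝ) / 2 + c * Real.sqrt t ≤ (hammingDist S.1 T.1 : ℝ) then true else false)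
         then 1 else 0)) :
    (1 - δ) * (1 -
        (((Finset.univ.filter (fun q : BalStr t × BalStr t =>
            (t : ℝ) / 2 - c * Real.sqrt t < (hammingDist q.1.1 q.2.1 : ℝ) ∧
            (hammingDist q.1.1 q.2.1 : ℝ) < (t : ℝ) / 2 + c * Real.sqrt t)).card : ℝ) /
          ((Fintype.card (BalStr t) : ℝ)) ^ 2)) ≤
      ∑ S : BalStr t, ∑ T : BalStr t, ∑ ω : Ω,
        (1 / ((Fintype.card (BalStr t) : ℝ)) ^ 2) * p ω *
          (if R (M S ω) T = (if t / 2 < hammingDist S.1 T.1 then true else false)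
           then 1 else 0) := by
  by_cases hN0 : Fintype.card (BalStr t) = 0
  · have hempty : IsEmpty (BalStr t) := Fintype.card_eq_zero_iff.mp hN0
    rw [Finset.univ_eq_empty, Finset.sum_empty] at hsucc
    have hδ : δ = 1 := le_antisymm hδ1 (by linarith)
    rw [Finset.univ_eq_empty (α := BalStr t), Finset.sum_empty, hδ]
    simp
  have hNpos : 0 < Fintype.card (BalStr t) := Nat.pos_of_ne_zero hN0
  have hNR : (0:ℝ) < (Fintype.card (BalStr t) : ℝ) := by exact_mod_cast hNpos
  obtain ⟨m4, hm4⟩ := ht4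
  have h2 : 2 ∣ t := ⟨2 * m4, by omega⟩
  have hcast : ((t / 2 : ℕ) : ℝ) = (t : ℝ) / 2 := by
    have hh : t / 2 * 2 = t := Nat.div_mul_cancel h2
    rw [eq_div_iff (by norm_num : (2:ℝ) ≠ 0)]
    exact_mod_cast hh
  have hst : (0:ℝ) < c * Real.sqrt t :=
    mul_pos hc0 (Real.sqrt_pos.mpr (by exact_mod_cast ht))
  set Q : ℕ := (Finset.univ.filter (fun q : BalStr t × BalStr t =>
      (t : ℝ) / 2 - c * Real.sqrt t < (hammingDist q.1.1 q.2.1 : ℝ) ∧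
      (hammingDist q.1.1 q.2.1 : ℝ) < (t : ℝ) / 2 + c * Real.sqrt t)).card with hQdef
  set q : ℝ := (Q : ℝ) / ((Fintype.card (BalStr t) : ℝ)) ^ 2 with hqdef
  -- q ≤ 1
  have hQle : Q ≤ Fintype.card (BalStr t) * Fintype.card (BalStr t) := by
    rw [hQdef]
    refine le_trans (Finset.card_filter_le _ _) ?_
    simp [Finset.card_univ, Fintype.card_prod]
  have hq1 : q ≤ 1 := by
    rw [hqdef, div_le_one (by positivity)]
    calc (Q : ℝ) ≤ ((Fintype.card (BalStr t) * Fintype.card (BalStr t) : ℕ) : ℝ) :=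
          Nat.cast_le.mpr hQle
      _ = ((Fintype.card (BalStr t) : ℝ)) ^ 2 := by push_cast; ring
  have hq0 : 0 ≤ 1 - q := by linarith
  -- pointwise key inequality
  have key : ∀ (S T : BalStr t) (ω : Ω),
      (1 - q) * (muDens t c S T * p ω *
        (if R (M S ω) T =
            (if (t : ℝ) / 2 + c * Real.sqrt t ≤ (hammingDist S.1 T.1 : ℝ) then true else false)
         then 1 else 0)) ≤
      (1 / ((Fintype.card (BalStr t) : ℝ)) ^ 2) * p ω *
        (if R (M S ω) T = (if t / 2 < hammingDist S.1 T.1 then true else false)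
         then 1 else 0) := by
    intro S T ω
    have hQS : Q = Fintype.card (BalStr t) * (GapB t c S).card := pair_count S
    have hpart := partitionB ht hc0 S
    have hfn := far_card_eq_near c h2 S
    have hFpos : 0 < (FarB t c S).card := Finset.card_pos.mpr (hnd S).1
    have hFR : (0:ℝ) < ((FarB t c S).card : ℝ) := by exact_mod_cast hFpos
    have hFN : ((FarB t c S).card : ℝ) = ((NearB t c S).card : ℝ) := by exact_mod_cast hfn
    have hsum : ((FarB t c S).card : ℝ) + ((NearB t c S).card : ℝ) + ((GapB t c S).card : ℝ)
        = (Fintype.card (BalStr t) : ℝ) := by exact_mod_cast hpart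
    have hQR : (Q : ℝ) = (Fintype.card (BalStr t) : ℝ) * ((GapB t c S).card : ℝ) := by
      exact_mod_cast hQS
    have hGR : ((GapB t c S).card : ℝ)
        = (Fintype.card (BalStr t) : ℝ) - 2 * ((FarB t c S).card : ℝ) := by linarith
    by_cases hF : T ∈ FarB t c S
    · have hfar : (t : ℝ) / 2 + c * Real.sqrt t ≤ (hammingDist S.1 T.1 : ℝ) := by
        simpa [FarB, Finset.mem_filter] using hF
      have hTnN : T ∉ NearB t c S := by
        simp only [NearB, Finset.mem_filter, Finset.mem_univ, true_and]
        intro hcon; linarith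
      have hg : t / 2 < hammingDist S.1 T.1 := by
        have hx : ((t / 2 : ℕ) : ℝ) < (hammingDist S.1 T.1 : ℝ) := by rw [hcast]; linarith
        exact_mod_cast hx
      rw [muDens, if_pos hF, if_neg hTnN, if_pos hfar, if_pos hg]
      apply le_of_eq
      have hcoef : (1 - q) * (1 / (Fintype.card (BalStr t) : ℝ) *
          (1 / 2 * (1 / ((FarB t c S).card : ℝ)) + 1 / 2 * 0)) =
          1 / ((Fintype.card (BalStr t) : ℝ)) ^ 2 := by
        rw [hqdef, hQR, hGR]
        field_simp
        ring
      linear_combination (p ω * (if R (M S ω) T = true then (1:ℝ) else 0)) * hcoef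
    · by_cases hNr : T ∈ NearB t c S
      · have hnear : (hammingDist S.1 T.1 : ℝ) ≤ (t : ℝ) / 2 - c * Real.sqrt t := by
          simpa [NearB, Finset.mem_filter] using hNr
        have hnf : ¬ ((t : ℝ) / 2 + c * Real.sqrt t ≤ (hammingDist S.1 T.1 : ℝ)) := by
          intro hcon; linarith
        have hng : ¬ (t / 2 < hammingDist S.1 T.1) := by
          have hx : (hammingDist S.1 T.1 : ℝ) < ((t / 2 : ℕ) : ℝ) := by rw [hcast]; linarith
          have hx2 : hammingDist S.1 T.1 < t / 2 := by exact_mod_cast hx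
          omega
        rw [muDens, if_neg hF, if_pos hNr, if_neg hnf, if_neg hng]
        apply le_of_eq
        have hcoef : (1 - q) * (1 / (Fintype.card (BalStr t) : ℝ) *
            (1 / 2 * 0 + 1 / 2 * (1 / ((NearB t c S).card : ℝ)))) =
            1 / ((Fintype.card (BalStr t) : ℝ)) ^ 2 := by
          rw [hqdef, hQR, hGR, ← hFN]
          field_simp
          ring
        linear_combination (p ω * (if R (M S ω) T = false then (1:ℝ) else 0)) * hcoef
      · rw [muDens, if_neg hF, if_neg hNr]
        have hz : (1 - q) * (1 / (Fintype.card (BalStr t) : ℝ) *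
            (1 / 2 * 0 + 1 / 2 * 0) * p ω *
            (if R (M S ω) T =
              (if (t : ℝ) / 2 + c * Real.sqrt t ≤ (hammingDist S.1 T.1 : ℝ) then true else false)
             then (1:ℝ) else 0)) = 0 := by ring
        rw [hz]
        have hind : (0:ℝ) ≤ (if R (M S ω) T =
            (if t / 2 < hammingDist S.1 T.1 then true else false) then (1:ℝ) else 0) := by
          split_ifs <;> norm_num
        have h1N : (0:ℝ) ≤ 1 / ((Fintype.card (BalStr t) : ℝ)) ^ 2 := by positivity
        exact mul_nonneg (mul_nonneg h1N (hp ω)) hind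
  calc (1 - δ) * (1 - q)
      ≤ (∑ S : BalStr t, ∑ T : BalStr t, ∑ ω : Ω,
          muDens t c S T * p ω *
            (if R (M S ω) T =
                (if (t : ℝ) / 2 + c * Real.sqrt t ≤ (hammingDist S.1 T.1 : ℝ) then true
                 else false)
             then 1 else 0)) * (1 - q) := mul_le_mul_of_nonneg_right hsucc hq0
    _ = ∑ S : BalStr t, ∑ T : BalStr t, ∑ ω : Ω,
          (1 - q) * (muDens t c S T * p ω *
            (if R (M S ω) T =
                (if (t : ℝ) / 2 + c * Real.sqrt t ≤ (hammingDist S.1 T.1 : ℝ) then true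
                 else false)
             then 1 else 0)) := by
        rw [mul_comm]
        simp only [Finset.mul_sum]
    _ ≤ ∑ S : BalStr t, ∑ T : BalStr t, ∑ ω : Ω,
          (1 / ((Fintype.card (BalStr t) : ℝ)) ^ 2) * p ω *
            (if R (M S ω) T = (if t / 2 < hammingDist S.1 T.1 then true else false)
             then 1 else 0) := by
        refine Finset.sum_le_sum fun S _ => Finset.sum_le_sum fun T _ =>
          Finset.sum_le_sum fun ω _ => key S T ω
end

section
/- Let G = (V, E) be a finite simple graph with |V| = n and |E| = s ≥ 1, and let w : E → ℝ be nonnegative edge weights. Then there exists an integer-valued weight function w' : E → ℤ with w'(e) ∈ {⌊w(e)⌋, ⌈w(e)⌉} for every e ∈ E, such that for every subset S ⊆ V: |cut_{w'}(S) − cut_w(S)| ≤ √(s·(n+1)). -/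
open Finset

attribute [local instance] Classical.propDecidable

/-- The weighted cut value of an edge-weight function `w` on a graph `G`:
the sum of `w` over the edges of `G` with exactly one endpoint in `S`. -/
noncomputable def cutEdges {V : Type} [Fintype V] (G : SimpleGraph V)
    (w : Sym2 V → ℝ) (S : Finset V) : ℝ :=
  ∑ u ∈ S, ∑ v ∈ Sᶜ, if G.Adj u v then w s(u, v) else 0



lemma cosh_le_aux {x : ℝ} (hx : |x| ≤ 1) : Real.cosh x ≤ 1 + x^2/2 + 5/96 * x^4 := by
  have h1 := Real.exp_bound hx (n := 4) (by norm_num)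
  have h2 := Real.exp_bound (x := -x) (by rwa [abs_neg]) (n := 4) (by norm_num)
  rw [show (4:ℕ).succ = 5 from rfl] at h1 h2
  simp only [Finset.sum_range_succ, Finset.sum_range_zero] at h1 h2
  norm_num [Nat.factorial] at h1 h2
  have hx4 : |x| ^ 4 = x ^ 4 := by
    rw [show (4:ℕ) = 2*2 from rfl, pow_mul, pow_mul, sq_abs]
  rw [hx4] at h1 h2
  rw [Real.cosh_eq]
  have e1 := (abs_sub_le_iff.1 h1).1
  have e2 := (abs_sub_le_iff.1 h2).1
  nlinarith [e1, e2]

lemma ceil_eq_floor_add_one_of_fract_ne {x : ℝ} (hne : Int.fract x ≠ 0) : ⌈x⌉ = ⌊x⌋ + 1 := by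
  have hf0 := Int.fract_nonneg x
  have h1 : (⌊x⌋ : ℝ) < x := by
    have h2 : 0 < Int.fract x := lt_of_le_of_ne hf0 (Ne.symm hne)
    unfold Int.fract at h2; linarith
  have h2 : ⌊x⌋ + 1 ≤ ⌈x⌉ := by
    have : (⌊x⌋ : ℝ) < ⌈x⌉ := lt_of_lt_of_le h1 (Int.le_ceil x)
    exact_mod_cast Int.add_one_le_of_lt (by exact_mod_cast this)
  exact le_antisymm (Int.ceil_le_floor_add_one x) h2

lemma round_mem_floor_ceil (x : ℝ) : round x = ⌊x⌋ ∨ round x = ⌈x⌉ := by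
  have hr : round x = ⌊x⌋ + ⌊Int.fract x + 1/2⌋ := by
    conv_lhs => rw [round_eq, ← Int.floor_add_fract x]
    rw [add_assoc, Int.floor_intCast_add]
  have hf0 := Int.fract_nonneg x
  have hf1 := Int.fract_lt_one x
  rcases lt_or_ge (Int.fract x) (1/2) with h | h
  · left
    have : ⌊Int.fract x + 1/2⌋ = 0 := by
      rw [Int.floor_eq_zero_iff]
      rw [Set.mem_Ico]
      constructor <;> linarith
    omega
  · right
    have hceil : ⌈x⌉ = ⌊x⌋ + 1 := ceil_eq_floor_add_one_of_fract_ne (by positivity)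
    have : ⌊Int.fract x + 1/2⌋ = 1 := by
      rw [Int.floor_eq_iff]
      constructor
      · push_cast; linarith
      · push_cast; linarith
    omega

lemma mgf_two_point {θ : ℝ} (c : ℝ) (h0 : 0 ≤ θ) (h1 : θ ≤ 1) :
    θ * Real.exp (c * (1 - θ)) + (1 - θ) * Real.exp (c * (-θ)) ≤
      Real.exp ((Real.cosh c - 1) / 2) := by
  set A := θ * Real.exp (c * (1 - θ)) + (1 - θ) * Real.exp (c * (-θ)) with hA
  set B := θ * Real.exp (-(c * (1 - θ))) + (1 - θ) * Real.exp (c * θ) with hBdef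
  have hB : 1 ≤ B := by
    have hcv := convexOn_exp.2 (Set.mem_univ (-(c * (1 - θ)))) (Set.mem_univ (c * θ))
      h0 (by linarith : (0:ℝ) ≤ 1 - θ) (by ring)
    simp only [smul_eq_mul] at hcv
    calc (1:ℝ) = Real.exp (θ * -(c * (1 - θ)) + (1 - θ) * (c * θ)) := by
          rw [show θ * -(c * (1 - θ)) + (1 - θ) * (c * θ) = 0 by ring, Real.exp_zero]
      _ ≤ B := hcv
  have hA0 : 0 ≤ A := by
    have := Real.exp_nonneg (c * (1 - θ)); have := Real.exp_nonneg (c * (-θ)); rw [hA]; nlinarith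
  have key : A * B = θ^2 + (1-θ)^2 + θ*(1-θ)*(Real.exp c + Real.exp (-c)) := by
    have e1 : Real.exp (c*(1-θ)) * Real.exp (-(c*(1-θ))) = 1 := by
      rw [← Real.exp_add, show c*(1-θ) + -(c*(1-θ)) = 0 by ring, Real.exp_zero]
    have e2 : Real.exp (c*(1-θ)) * Real.exp (c*θ) = Real.exp c := by
      rw [← Real.exp_add, show c*(1-θ) + c*θ = c by ring]
    have e3 : Real.exp (c*(-θ)) * Real.exp (-(c*(1-θ))) = Real.exp (-c) := by
      rw [← Real.exp_add, show c*(-θ) + -(c*(1-θ)) = -c by ring]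
    have e4 : Real.exp (c*(-θ)) * Real.exp (c*θ) = 1 := by
      rw [← Real.exp_add, show c*(-θ) + c*θ = 0 by ring, Real.exp_zero]
    rw [hA, hBdef]
    linear_combination (θ^2) * e1 + (θ*(1-θ)) * e2 + (θ*(1-θ)) * e3 + ((1-θ)^2) * e4
  have hcosh : Real.exp c + Real.exp (-c) = 2 * Real.cosh c := by
    rw [Real.cosh_eq]; ring
  have hc1 : 1 ≤ Real.cosh c := Real.one_le_cosh c
  have hq : θ * (1-θ) ≤ 1/4 := by nlinarith [sq_nonneg (θ - 1/2)]
  have hAB : A ≤ 1 + (Real.cosh c - 1)/2 := by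
    calc A ≤ A * B := le_mul_of_one_le_right hA0 hB
      _ = 1 + 2*(θ*(1-θ))*(Real.cosh c - 1) := by rw [key, hcosh]; ring
      _ ≤ 1 + (Real.cosh c - 1)/2 := by nlinarith
  calc A ≤ 1 + (Real.cosh c - 1)/2 := hAB
    _ ≤ Real.exp ((Real.cosh c - 1)/2) := by
        linarith [Real.add_one_le_exp ((Real.cosh c - 1)/2)]

noncomputable def cutF {V : Type} [Fintype V] [DecidableEq V] (G : SimpleGraph V)
    (S : Finset V) : Finset (Sym2 V) :=
  ((S ×ˢ Sᶜ).filter fun p => G.Adj p.1 p.2).image fun p => s(p.1, p.2)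

lemma cutEdges_eq_sum {V : Type} [Fintype V] [DecidableEq V] (G : SimpleGraph V)
    (f : Sym2 V → ℝ) (S : Finset V) :
    cutEdges G f S = ∑ e ∈ cutF G S, f e := by
  rw [cutF, Finset.sum_image, cutEdges]
  · rw [Finset.sum_filter, Finset.sum_product]; congr!
  · intro p hp q hq hpq
    simp only [Finset.mem_coe, Finset.mem_filter, Finset.mem_product, Finset.mem_compl] at hp hq
    rw [Sym2.eq_iff] at hpq
    rcases hpq with ⟨h1, h2⟩ | ⟨h1, h2⟩
    · exact Prod.ext h1 h2
    · exact absurd (h1 ▸ hp.1.1) hq.1.2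

lemma cutF_subset_edgeFinset {V : Type} [Fintype V] [DecidableEq V] (G : SimpleGraph V)
    (S : Finset V) [Fintype G.edgeSet] : cutF G S ⊆ G.edgeFinset := by
  intro e he
  rw [cutF, Finset.mem_image] at he
  obtain ⟨p, hp, rfl⟩ := he
  rw [SimpleGraph.mem_edgeFinset, SimpleGraph.mem_edgeSet]
  exact (Finset.mem_filter.1 hp).2



set_option maxHeartbeats 4000000 in
/-- Unbiased randomized rounding of edge weights: for a graph with `n` vertices and `s ≥ 1`
edges with nonnegative weights `w`, there is an integer weight function `w'` with
`w'(e) ∈ {⌊w e⌋, ⌈w e⌉}` on every edge, whose every cut value differs from that of `w` by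
at most `√(s(n+1))`. -/
theorem rounding_preserves_cuts {V : Type} [Fintype V] [DecidableEq V]
    (G : SimpleGraph V) (w : Sym2 V → ℝ)
    (hw : ∀ e ∈ G.edgeSet, 0 ≤ w e) (hs : 1 ≤ G.edgeSet.ncard) :
    ∃ w' : Sym2 V → ℤ,
      (∀ e ∈ G.edgeSet, w' e = ⌊w e⌋ ∨ w' e = ⌈w e⌉) ∧
      ∀ S : Finset V,
        |cutEdges G (fun e => (w' e : ℝ)) S - cutEdges G w S| ≤
          Real.sqrt ((G.edgeSet.ncard : ℝ) * ((Fintype.card V : ℝ) + 1)) := by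
  set n := Fintype.card V with hn
  set F : Finset (Sym2 V) := G.edgeFinset with hF
  have hcard : G.edgeSet.ncard = F.card := Set.ncard_eq_toFinset_card' _
  set sN := F.card with hsN
  have hs1 : 1 ≤ sN := hcard ▸ hs
  set m : ℝ := (n : ℝ) + 1 with hm
  have hm1 : (1:ℝ) ≤ m := by
    rw [hm]; have : (0:ℝ) ≤ (n:ℝ) := Nat.cast_nonneg n; linarith
  set t : ℝ := Real.sqrt ((G.edgeSet.ncard : ℝ) * ((n : ℝ) + 1)) with ht
  have htval : t = Real.sqrt ((sN : ℝ) * m) := by rw [ht, hcard, hm]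
  have hsR0 : (0:ℝ) < (sN : ℝ) := by exact_mod_cast hs1
  have hsm0 : (0:ℝ) ≤ (sN : ℝ) * m := by positivity
  have ht2 : t ^ 2 = (sN : ℝ) * m := by rw [htval, Real.sq_sqrt hsm0]
  have hcc : ∀ S : Finset V, ((cutF G S).card : ℝ) ≤ (sN : ℝ) := by
    intro S; exact_mod_cast Finset.card_le_card (cutF_subset_edgeFinset G S)
  rcases le_or_gt sN (4 * (n + 1)) with hcase | hcase
  · -- deterministic rounding
    refine ⟨fun e => round (w e), fun e _ => round_mem_floor_ceil (w e), fun S => ?_⟩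
    rw [cutEdges_eq_sum, cutEdges_eq_sum, ← Finset.sum_sub_distrib]
    calc |∑ e ∈ cutF G S, ((round (w e) : ℝ) - w e)|
        ≤ ∑ e ∈ cutF G S, |(round (w e) : ℝ) - w e| := Finset.abs_sum_le_sum_abs _ _
      _ ≤ ∑ _e ∈ cutF G S, (1/2 : ℝ) := by
          refine Finset.sum_le_sum fun e _ => ?_
          rw [abs_sub_comm]; exact abs_sub_round (w e)
      _ = ((cutF G S).card : ℝ) / 2 := by rw [Finset.sum_const]; push_cast; ring
      _ ≤ (sN : ℝ) / 2 := by linarith [hcc S]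
      _ ≤ t := by
          rw [htval, show ((sN:ℝ)/2) = Real.sqrt (((sN:ℝ)/2)^2) from
            (Real.sqrt_sq (by positivity)).symm]
          apply Real.sqrt_le_sqrt
          have h4 : (sN : ℝ) ≤ 4 * m := by rw [hm]; exact_mod_cast hcase
          nlinarith
  · -- probabilistic rounding
    have h4m : 4 * m ≤ (sN : ℝ) := by
      rw [hm]
      have h := hcase.le
      exact_mod_cast h
    set θ : Sym2 V → ℝ := fun e => Int.fract (w e) with hθ
    have hθ0 : ∀ e, 0 ≤ θ e := fun e => Int.fract_nonneg _
    have hθ1 : ∀ e, θ e < 1 := fun e => Int.fract_lt_one _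
    set X : Sym2 V → Bool → ℝ := fun e b => if b then 1 - θ e else -θ e with hX
    have hXt : ∀ e, X e true = 1 - θ e := fun e => rfl
    have hXf : ∀ e, X e false = -θ e := fun e => rfl
    set q : Sym2 V → Bool → ℝ :=
      fun e b => if e ∈ F then (if b then θ e else 1 - θ e) else 1/2 with hq
    have hqt : ∀ e ∈ F, q e true = θ e := by intro e h; simp only [hq, h, if_true]
    have hqf : ∀ e ∈ F, q e false = 1 - θ e := by
      intro e h
      simp only [hq, h, if_true, Bool.false_eq_true, if_false]
    set P : (Sym2 V → Bool) → ℝ := fun σ => ∏ e, q e (σ e) with hP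
    set err : (Sym2 V → Bool) → Finset V → ℝ :=
      fun σ S => ∑ e ∈ cutF G S, X e (σ e) with herr
    have hq0 : ∀ e b, 0 ≤ q e b := by
      intro e b
      rw [hq]
      dsimp only
      split
      · split
        · exact hθ0 e
        · linarith [hθ1 e]
      · norm_num
    have hqsum : ∀ e, q e true + q e false = 1 := by
      intro e
      rw [hq]
      dsimp only
      split
      · simp only [if_true, Bool.false_eq_true, if_false]; ring
      · norm_num
    have hP0 : ∀ σ, 0 ≤ P σ := fun σ => Finset.prod_nonneg fun e _ => hq0 e (σ e)
    have hPsum : ∑ σ : Sym2 V → Bool, P σ = 1 := by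
      have h := Finset.prod_univ_sum (fun _ : Sym2 V => (Finset.univ : Finset Bool)) q
      rw [Fintype.piFinset_univ] at h
      rw [hP, ← h]
      rw [Finset.prod_congr rfl fun e _ => (Fintype.sum_bool (q e)).trans (hqsum e)]
      exact Finset.prod_const_one
    set lam : ℝ := 2 * t / (sN : ℝ) with hlam
    have htpos : 0 < t := by rw [htval]; apply Real.sqrt_pos.2; exact mul_pos hsR0 (by linarith)
    have hlampos : 0 < lam := by
      rw [hlam]; apply div_pos (by linarith) hsR0
    have hlamt : lam * t = 2 * m := by
      rw [hlam, div_mul_eq_mul_div, div_eq_iff hsR0.ne']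
      linear_combination 2 * ht2
    have hlamsq : lam ^ 2 = 4 * m / (sN : ℝ) := by
      rw [hlam, div_pow, div_eq_div_iff (pow_pos hsR0 2).ne' hsR0.ne']
      linear_combination (4*(sN:ℝ)) * ht2
    have hlamsq1 : lam^2 ≤ 1 := by rw [hlamsq]; exact div_le_one_of_le₀ h4m hsR0.le
    have hlam1 : lam ≤ 1 := (le_abs_self lam).trans ((sq_le_one_iff_abs_le_one lam).1 hlamsq1)
    have hcosh1 : 1 ≤ Real.cosh lam := Real.one_le_cosh lam
    -- Chernoff bound for each cut and each sign
    have chernoff : ∀ (S : Finset V) (c : ℝ), Real.cosh c = Real.cosh lam →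
        ∑ σ : Sym2 V → Bool, P σ * Real.exp (c * err σ S) ≤
          Real.exp ((Real.cosh lam - 1) / 2 * (sN : ℝ)) := by
      intro S c hcoshc
      set D : Sym2 V → Bool → ℝ :=
        fun e b => q e b * (if e ∈ cutF G S then Real.exp (c * X e b) else 1) with hD
      have hD0 : ∀ e b, 0 ≤ D e b := by
        intro e b
        apply mul_nonneg (hq0 e b)
        split
        · exact (Real.exp_pos _).le
        · norm_num
      have hterm : ∀ σ : Sym2 V → Bool,
          P σ * Real.exp (c * err σ S) = ∏ e, D e (σ e) := by
        intro σ
        have h1 : Real.exp (c * err σ S) =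
            ∏ e, (if e ∈ cutF G S then Real.exp (c * X e (σ e)) else 1) := by
          rw [herr]
          dsimp only
          rw [Finset.mul_sum, Real.exp_sum]
          rw [Finset.prod_ite_mem Finset.univ (cutF G S)
            (fun e => Real.exp (c * X e (σ e))), Finset.univ_inter]
        rw [h1, hP, ← Finset.prod_mul_distrib]
      have hident : ∑ σ : Sym2 V → Bool, P σ * Real.exp (c * err σ S)
          = ∏ e, (D e true + D e false) := by
        have h := Finset.prod_univ_sum (fun _ : Sym2 V => (Finset.univ : Finset Bool)) D
        rw [Fintype.piFinset_univ] at h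
        rw [Finset.sum_congr rfl fun σ _ => hterm σ, ← h]
        exact Finset.prod_congr rfl fun e _ => Fintype.sum_bool (D e)
      have hDsum : ∀ e, D e true + D e false ≤
          (if e ∈ cutF G S then Real.exp ((Real.cosh lam - 1) / 2) else 1) := by
        intro e
        by_cases he : e ∈ cutF G S
        · have heF : e ∈ F := cutF_subset_edgeFinset G S he
          rw [if_pos he, hD]
          dsimp only
          rw [if_pos he, if_pos he, hqt e heF, hqf e heF, hXt, hXf]
          calc θ e * Real.exp (c * (1 - θ e)) + (1 - θ e) * Real.exp (c * (-θ e))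
              ≤ Real.exp ((Real.cosh c - 1) / 2) :=
                mgf_two_point c (hθ0 e) (hθ1 e).le
            _ = Real.exp ((Real.cosh lam - 1) / 2) := by rw [hcoshc]
        · rw [if_neg he, hD]
          dsimp only
          rw [if_neg he, if_neg he, mul_one, mul_one, hqsum e]
      calc ∑ σ : Sym2 V → Bool, P σ * Real.exp (c * err σ S)
          = ∏ e, (D e true + D e false) := hident
        _ ≤ ∏ e, (if e ∈ cutF G S then Real.exp ((Real.cosh lam - 1) / 2) else 1) :=
            Finset.prod_le_prod (fun e _ => add_nonneg (hD0 e true) (hD0 e false))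
              (fun e _ => hDsum e)
        _ = Real.exp ((Real.cosh lam - 1) / 2) ^ (cutF G S).card := by
            rw [Finset.prod_ite_mem Finset.univ (cutF G S)
              (fun _ => Real.exp ((Real.cosh lam - 1) / 2)), Finset.univ_inter,
              Finset.prod_const]
        _ ≤ Real.exp ((Real.cosh lam - 1) / 2) ^ sN := by
            apply pow_le_pow_right₀
            · exact Real.one_le_exp (by linarith)
            · exact Finset.card_le_card (cutF_subset_edgeFinset G S)
        _ = Real.exp ((Real.cosh lam - 1) / 2 * (sN : ℝ)) := by
            rw [← Real.exp_nat_mul, mul_comm]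
    -- tail bounds
    set β : ℝ := Real.exp ((Real.cosh lam - 1) / 2 * (sN : ℝ) - lam * t) with hβ
    have tail : ∀ (S : Finset V) (c : ℝ), Real.cosh c = Real.cosh lam →
        ∑ σ ∈ Finset.univ.filter (fun σ : Sym2 V → Bool => lam * t < c * err σ S),
          P σ ≤ β := by
      intro S c hcoshc
      have h1 : ∑ σ ∈ Finset.univ.filter
            (fun σ : Sym2 V → Bool => lam * t < c * err σ S), P σ ≤
          ∑ σ ∈ Finset.univ.filter
            (fun σ : Sym2 V → Bool => lam * t < c * err σ S),
            P σ * Real.exp (c * err σ S - lam * t) := by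
        apply Finset.sum_le_sum
        intro σ hσ
        have hgt : (0:ℝ) ≤ c * err σ S - lam * t := by
          rw [Finset.mem_filter] at hσ; linarith [hσ.2]
        exact le_mul_of_one_le_right (hP0 σ) (Real.one_le_exp hgt)
      have h2 : ∑ σ ∈ Finset.univ.filter
            (fun σ : Sym2 V → Bool => lam * t < c * err σ S),
            P σ * Real.exp (c * err σ S - lam * t) ≤
          ∑ σ : Sym2 V → Bool, P σ * Real.exp (c * err σ S - lam * t) :=
        Finset.sum_le_sum_of_subset_of_nonneg (Finset.filter_subset _ _)
          (fun σ _ _ => mul_nonneg (hP0 σ) (Real.exp_pos _).le)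
      have h3 : ∑ σ : Sym2 V → Bool, P σ * Real.exp (c * err σ S - lam * t)
          = (∑ σ : Sym2 V → Bool, P σ * Real.exp (c * err σ S)) *
              Real.exp (-(lam * t)) := by
        rw [Finset.sum_mul]
        refine Finset.sum_congr rfl fun σ _ => ?_
        rw [mul_assoc, ← Real.exp_add, sub_eq_add_neg]
      calc ∑ σ ∈ Finset.univ.filter
            (fun σ : Sym2 V → Bool => lam * t < c * err σ S), P σ
          ≤ ∑ σ ∈ Finset.univ.filter
            (fun σ : Sym2 V → Bool => lam * t < c * err σ S),
            P σ * Real.exp (c * err σ S - lam * t) := h1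
        _ ≤ ∑ σ : Sym2 V → Bool, P σ * Real.exp (c * err σ S - lam * t) := h2
        _ = (∑ σ : Sym2 V → Bool, P σ * Real.exp (c * err σ S)) *
              Real.exp (-(lam * t)) := h3
        _ ≤ Real.exp ((Real.cosh lam - 1) / 2 * (sN : ℝ)) * Real.exp (-(lam * t)) :=
            mul_le_mul_of_nonneg_right (chernoff S c hcoshc) (Real.exp_pos _).le
        _ = β := by rw [hβ, ← Real.exp_add]; ring_nf
    -- numeric bound
    have hnum : (2:ℝ) ^ n * (2 * β) < 1 := by
      have hcoshle : Real.cosh lam ≤ 1 + lam^2/2 + 5/96*lam^4 :=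
        cosh_le_aux (by rw [abs_of_pos hlampos]; exact hlam1)
      have hl2 : lam^2 * (sN:ℝ) = 4*m := by
        rw [hlamsq, div_mul_eq_mul_div, mul_div_assoc, div_self hsR0.ne', mul_one]
      have hlam4 : lam^4 * (sN:ℝ) ≤ 4 * m := by
        have he : lam^4 * (sN:ℝ) = lam^2 * (lam^2 * (sN:ℝ)) := by ring
        rw [he, hl2]
        have h0 : (0:ℝ) ≤ 4*m := by linarith
        have := mul_le_mul_of_nonneg_right hlamsq1 h0
        linarith
      have hexp : (Real.cosh lam - 1)/2*(sN:ℝ) - lam*t ≤ -(43/48*m) := by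
        have h1 : (Real.cosh lam - 1) * (sN:ℝ) ≤ (lam^2/2 + 5/96*lam^4) * (sN:ℝ) :=
          mul_le_mul_of_nonneg_right (by linarith) hsR0.le
        have h2 : (lam^2/2 + 5/96*lam^4) * (sN:ℝ)
            = (lam^2 * (sN:ℝ))/2 + 5/96*(lam^4*(sN:ℝ)) := by ring
        rw [h2, hl2] at h1
        rw [hlamt]
        linarith [hlam4, h1]
      have hβle : β ≤ Real.exp (-(43/48*m)) := by
        rw [hβ]; exact Real.exp_le_exp.2 hexp
      have h2exp : (2:ℝ)^(n+1) = Real.exp (((n:ℝ)+1) * Real.log 2) := by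
        rw [← Real.exp_log (show (0:ℝ) < 2 by norm_num), ← Real.exp_nat_mul,
          Real.exp_log (show (0:ℝ) < 2 by norm_num)]
        push_cast
        ring_nf
      have hfin : (2:ℝ)^(n+1) * Real.exp (-(43/48*m)) < 1 := by
        rw [h2exp, ← Real.exp_add]
        apply Real.exp_lt_one_iff.2
        have hlog := Real.log_two_lt_d9
        rw [hm]
        nlinarith [hm1, hlog, hm]
      have hβ0 : 0 < β := by rw [hβ]; exact Real.exp_pos _
      calc (2:ℝ)^n * (2*β) = (2:ℝ)^(n+1) * β := by ring
        _ ≤ (2:ℝ)^(n+1) * Real.exp (-(43/48*m)) := by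
            apply mul_le_mul_of_nonneg_left hβle (by positivity)
        _ < 1 := hfin
    -- existence of a good assignment
    have hexists : ∃ σ : Sym2 V → Bool,
        (∀ S : Finset V, |err σ S| ≤ t) ∧ (∀ e ∈ F, θ e = 0 → σ e = false) := by
      by_contra hcon
      push_neg at hcon
      have hpoint : ∀ σ : Sym2 V → Bool, P σ ≤
          ∑ S : Finset V, ((if lam * t < lam * err σ S then P σ else 0)
            + (if lam * t < -lam * err σ S then P σ else 0)) := by
        intro σ
        have hnn : ∀ S : Finset V,
            (0:ℝ) ≤ (if lam * t < lam * err σ S then P σ else 0)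
              + (if lam * t < -lam * err σ S then P σ else 0) := by
          intro S
          have g1 : (0:ℝ) ≤ (if lam * t < lam * err σ S then P σ else 0) := by
            split
            · exact hP0 σ
            · exact le_refl 0
          have g2 : (0:ℝ) ≤ (if lam * t < -lam * err σ S then P σ else 0) := by
            split
            · exact hP0 σ
            · exact le_refl 0
          exact add_nonneg g1 g2
        by_cases hgood : ∀ S : Finset V, |err σ S| ≤ t
        · obtain ⟨e, heF, hθe, hσe⟩ := hcon σ hgood
          have hσt : σ e = true := by
            revert hσe; cases σ e <;> simp
          have hPz : P σ = 0 := by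
            rw [hP]
            apply Finset.prod_eq_zero (Finset.mem_univ e)
            rw [hσt, hqt e heF, hθe]
          exact hPz.le.trans (Finset.sum_nonneg fun S _ => hnn S)
        · push_neg at hgood
          obtain ⟨S₀, hS₀⟩ := hgood
          have hdis : lam * t < lam * err σ S₀ ∨ lam * t < -lam * err σ S₀ := by
            rcases lt_abs.1 hS₀ with h | h
            · left; exact (mul_lt_mul_iff_right₀ hlampos).2 h
            · right
              calc lam * t < lam * (-err σ S₀) := (mul_lt_mul_iff_right₀ hlampos).2 h
                _ = -lam * err σ S₀ := by ring
          have hle : P σ ≤ (if lam * t < lam * err σ S₀ then P σ else 0)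
              + (if lam * t < -lam * err σ S₀ then P σ else 0) := by
            rcases hdis with h | h
            · rw [if_pos h]
              have : (0:ℝ) ≤ if lam * t < -lam * err σ S₀ then P σ else 0 := by
                split
                · exact hP0 σ
                · exact le_refl 0
              linarith
            · rw [if_pos h]
              have : (0:ℝ) ≤ if lam * t < lam * err σ S₀ then P σ else 0 := by
                split
                · exact hP0 σ
                · exact le_refl 0
              linarith
          exact hle.trans (Finset.single_le_sum (fun S _ => hnn S) (Finset.mem_univ S₀))
      have h1 : (1:ℝ) ≤ ∑ S : Finset V, ∑ σ : Sym2 V → Bool,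
          ((if lam * t < lam * err σ S then P σ else 0)
            + (if lam * t < -lam * err σ S then P σ else 0)) := by
        rw [← Finset.sum_comm, ← hPsum]
        exact Finset.sum_le_sum fun σ _ => hpoint σ
      have h2 : ∀ S : Finset V, ∑ σ : Sym2 V → Bool,
          ((if lam * t < lam * err σ S then P σ else 0)
            + (if lam * t < -lam * err σ S then P σ else 0)) ≤ 2 * β := by
        intro S
        rw [Finset.sum_add_distrib]
        have ha : ∑ σ : Sym2 V → Bool, (if lam * t < lam * err σ S then P σ else 0)
            = ∑ σ ∈ Finset.univ.filter
                (fun σ : Sym2 V → Bool => lam * t < lam * err σ S), P σ :=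
          (Finset.sum_filter _ _).symm
        have hb : ∑ σ : Sym2 V → Bool, (if lam * t < -lam * err σ S then P σ else 0)
            = ∑ σ ∈ Finset.univ.filter
                (fun σ : Sym2 V → Bool => lam * t < -lam * err σ S), P σ :=
          (Finset.sum_filter _ _).symm
        rw [ha, hb]
        have t1 := tail S lam rfl
        have t2 := tail S (-lam) (Real.cosh_neg lam)
        have e2 : ∑ σ ∈ Finset.univ.filter
              (fun σ : Sym2 V → Bool => lam * t < -lam * err σ S), P σ
            = ∑ σ ∈ Finset.univ.filter
              (fun σ : Sym2 V → Bool => lam * t < (-lam) * err σ S), P σ := by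
          norm_num
        rw [e2]
        linarith
      have h3 : ∑ S : Finset V, (2*β : ℝ) = (2:ℝ)^n * (2*β) := by
        rw [Finset.sum_const, Finset.card_univ, Fintype.card_finset, nsmul_eq_mul]
        push_cast
        ring
      have h4 : (1:ℝ) ≤ (2:ℝ)^n * (2*β) := by
        calc (1:ℝ) ≤ ∑ S : Finset V, ∑ σ : Sym2 V → Bool,
            ((if lam * t < lam * err σ S then P σ else 0)
              + (if lam * t < -lam * err σ S then P σ else 0)) := h1
          _ ≤ ∑ S : Finset V, (2*β : ℝ) := Finset.sum_le_sum fun S _ => h2 S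
          _ = (2:ℝ)^n * (2*β) := h3
      linarith
    obtain ⟨σ, hσgood, hσzero⟩ := hexists
    refine ⟨fun e => if σ e then ⌊w e⌋ + 1 else ⌊w e⌋, ?_, ?_⟩
    · intro e he
      dsimp only
      have heF : e ∈ F := by rw [hF, SimpleGraph.mem_edgeFinset]; exact he
      by_cases hb : σ e = true
      · right
        rw [if_pos hb]
        have hθne : θ e ≠ 0 := by
          intro h0
          have hzz := hσzero e heF h0
          rw [hzz] at hb
          exact Bool.false_ne_true hb
        have : Int.fract (w e) ≠ 0 := hθne
        exact (ceil_eq_floor_add_one_of_fract_ne this).symm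
      · left; rw [if_neg hb]
    · intro S
      dsimp only
      have hdiff : cutEdges G
            (fun e => (((if σ e then ⌊w e⌋ + 1 else ⌊w e⌋ : ℤ)) : ℝ)) S
          - cutEdges G w S = err σ S := by
        rw [cutEdges_eq_sum, cutEdges_eq_sum, ← Finset.sum_sub_distrib, herr]
        refine Finset.sum_congr rfl fun e _ => ?_
        by_cases hb : σ e = true
        · simp only [hb, if_true, hXt, hθ]
          unfold Int.fract
          push_cast
          ring
        · have hbf : σ e = false := by revert hb; cases σ e <;> simp
          simp only [hbf, Bool.false_eq_true, if_false, hXf, hθ]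
          unfold Int.fract
          push_cast
          ring
      calc |cutEdges G (fun e => (((if σ e then ⌊w e⌋ + 1 else ⌊w e⌋ : ℤ)) : ℝ)) S
            - cutEdges G w S| = |err σ S| := by rw [hdiff]
        _ ≤ t := hσgood S
end

section
/- Let G be a connected simple graph on a finite vertex set V with edge weights w, and let T be a maximum-weight spanning tree of G, i.e., a spanning subgraph of G that is a tree on V and whose total edge weight is at least that of every spanning tree of G. Then for every subset S ⊆ V with ∅ ≠ S ≠ V, the tree T contains an edge e crossing the cut (S, V∖S) whose weight w(e) equals the maximum of w(f) over all edges f of G crossing the cut (S, V∖S). -/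
open Finset

attribute [local instance] Classical.propDecidable

/-- Twice the total edge weight of a graph `H` (each edge counted in both orientations). -/
noncomputable def totalWeight {V : Type} [Fintype V] (H : SimpleGraph V) (w : Sym2 V → ℝ) : ℝ :=
  ∑ u : V, ∑ v : V, if H.Adj u v then w s(u, v) else 0

/-- Any walk from inside `S` to outside `S` has a dart crossing the cut. -/
lemma exists_crossing_dart {V : Type} {H : SimpleGraph V} {S : Set V} :
    ∀ {a b : V} (p : H.Walk a b), a ∈ S → b ∉ S →
      ∃ d ∈ p.darts, d.fst ∈ S ∧ d.snd ∉ S := by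
  intro a b p
  induction p with
  | nil => intro h h'; exact absurd h h'
  | @cons a c b h q ih =>
    intro ha hb
    by_cases hc : c ∈ S
    · obtain ⟨d, hd, hd'⟩ := ih hc hb
      exact ⟨d, by simp [SimpleGraph.Walk.darts_cons, hd], hd'⟩
    · exact ⟨⟨(a, c), h⟩, by simp [SimpleGraph.Walk.darts_cons], ha, hc⟩

/-- Deleting a non-disconnecting edge keeps connectivity. -/
lemma connected_sdiff_of_reachable {V : Type} {H : SimpleGraph V} {u v : V}
    (hH : H.Connected) (hr : (H \ SimpleGraph.fromEdgeSet {s(u, v)}).Reachable u v) :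
    (H \ SimpleGraph.fromEdgeSet {s(u, v)}).Connected := by
  have hpre : (H \ SimpleGraph.fromEdgeSet {s(u, v)}).Preconnected := by
    intro a b
    obtain ⟨p⟩ := hH.preconnected a b
    induction p with
    | nil => rfl
    | @cons a c b h q ih =>
      refine .trans ?_ ih
      by_cases he : s(a, c) = s(u, v)
      · rw [Sym2.eq_iff] at he
        rcases he with ⟨rfl, rfl⟩ | ⟨rfl, rfl⟩
        · exact hr
        · exact hr.symm
      · exact SimpleGraph.Adj.reachable (by simp [h, he])
  have := hH.nonempty
  exact SimpleGraph.Connected.mk hpre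

lemma pair_sum_eq {V : Type} [Fintype V] (c : ℝ) (p q : V × V) (hpq : p ≠ q) :
    (∑ a : V, ∑ b : V, if (a, b) = p ∨ (a, b) = q then c else 0) = 2 * c := by
  rw [← Fintype.sum_prod_type']
  calc (∑ z : V × V, if z = p ∨ z = q then c else 0)
      = ∑ z : V × V, if z ∈ ({p, q} : Finset (V × V)) then c else 0 := by
        simp [Finset.mem_insert]
    _ = ∑ _z ∈ ({p, q} : Finset (V × V)), c := by
        rw [Finset.sum_ite_mem, Finset.univ_inter]
    _ = 2 * c := by
        rw [Finset.sum_const, Finset.card_insert_of_notMem (by simpa using hpq),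
          Finset.card_singleton]
        simp [two_mul]

/-- A maximum-weight spanning tree contains, for every nontrivial cut `(S, V∖S)`, an edge
crossing the cut whose weight is maximal among all edges of `G` crossing that cut. -/
theorem max_spanning_tree_heaviest_cut_edge {V : Type} [Fintype V]
    (G : SimpleGraph V) (hG : G.Connected) (w : Sym2 V → ℝ)
    (T : SimpleGraph V) (hTG : T ≤ G) (hT : T.IsTree)
    (hmax : ∀ T' : SimpleGraph V, T' ≤ G → T'.IsTree → totalWeight T' w ≤ totalWeight T w) :
    ∀ S : Set V, S.Nonempty → S ≠ Set.univ →
      ∃ u v : V, T.Adj u v ∧ u ∈ S ∧ v ∉ S ∧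
        ∀ x y : V, G.Adj x y → x ∈ S → y ∉ S → w s(x, y) ≤ w s(u, v) := by
  intro S hS hSu
  obtain ⟨a, ha⟩ := hS
  obtain ⟨b, hb⟩ : ∃ b, b ∉ S := by
    by_contra h
    push_neg at h
    exact hSu (Set.eq_univ_of_forall h)
  -- the set of crossing edges of G, and a maximum-weight one
  set F : Finset (V × V) :=
    Finset.univ.filter (fun p => G.Adj p.1 p.2 ∧ p.1 ∈ S ∧ p.2 ∉ S) with hF
  have hFne : F.Nonempty := by
    obtain ⟨p⟩ := hG.preconnected a b
    obtain ⟨d, _, hd1, hd2⟩ := exists_crossing_dart p ha hb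
    exact ⟨(d.fst, d.snd), by simp [hF, d.adj, hd1, hd2]⟩
  obtain ⟨⟨x, y⟩, hxyF, hmaxxy⟩ := F.exists_max_image (fun p => w s(p.1, p.2)) hFne
  rw [hF, Finset.mem_filter] at hxyF
  obtain ⟨-, hxyG, hxS, hyS⟩ := hxyF
  have hmax' : ∀ x' y', G.Adj x' y' → x' ∈ S → y' ∉ S → w s(x', y') ≤ w s(x, y) :=
    fun x' y' h1 h2 h3 => hmaxxy (x', y') (by simp [hF, h1, h2, h3])
  by_cases hTxy : T.Adj x y
  · exact ⟨x, y, hTxy, hxS, hyS, hmax'⟩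
  -- the T-path from x to y, and a dart of it crossing the cut
  obtain ⟨p0⟩ := hT.isConnected.preconnected x y
  set p : T.Walk x y := (p0.toPath : T.Walk x y) with hpdef
  have hp : p.IsPath := p0.toPath.isPath
  obtain ⟨d, hdmem, hdS, hdS'⟩ := exists_crossing_dart p hxS hyS
  obtain ⟨⟨u, v⟩, hTuv⟩ := d
  have huvmem : s(u, v) ∈ p.edges := by
    have := List.mem_map_of_mem (f := SimpleGraph.Dart.edge) hdmem
    simpa [SimpleGraph.Walk.edges, SimpleGraph.Dart.edge] using this
  refine ⟨u, v, hTuv, hdS, hdS', fun x' y' h1 h2 h3 => le_trans (hmax' x' y' h1 h2 h3) ?_⟩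
  -- it remains to show `w s(x, y) ≤ w s(u, v)`; suppose not
  by_contra hlt
  push_neg at hlt
  have hxyne : x ≠ y := fun h => hyS (h ▸ hxS)
  have hsne : s(u, v) ≠ s(x, y) := by
    intro h
    rcases Sym2.eq_iff.mp h with ⟨rfl, rfl⟩ | ⟨rfl, rfl⟩
    · exact hTxy hTuv
    · exact hTxy hTuv.symm
  have hsxyp : s(x, y) ∉ p.edges := fun h => hTxy (p.adj_of_mem_edges h)
  -- every T-walk from x to y uses the edge s(u, v)
  have hall : ∀ q : T.Walk x y, s(u, v) ∈ q.edges := by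
    intro q
    have heq : p = (q.toPath : T.Walk x y) :=
      (hT.existsUnique_path x y).unique hp q.toPath.isPath
    exact q.edges_toPath_subset (heq ▸ huvmem)
  -- the exchanged graph
  set H : SimpleGraph V := T ⊔ SimpleGraph.edge x y with hHdef
  have hTH : T ≤ H := le_sup_left
  have hH : H.Connected := hT.isConnected.mono hTH
  have hpe : ∀ e ∈ p.edges, e ∈ H.edgeSet :=
    fun e he => SimpleGraph.edgeSet_mono hTH (p.edges_subset_edgeSet he)
  set p' : H.Walk x y := p.transfer H hpe with hp'def
  have hAdjH : H.Adj y x := by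
    rw [hHdef, SimpleGraph.sup_adj, SimpleGraph.edge_adj]
    exact Or.inr ⟨Or.inr ⟨rfl, rfl⟩, hxyne.symm⟩
  set c : H.Walk y y := SimpleGraph.Walk.cons hAdjH p' with hcdef
  have hc : c.IsCycle := by
    refine (SimpleGraph.Walk.cons_isCycle_iff p' hAdjH).mpr ⟨hp.transfer hpe, ?_⟩
    rw [hp'def, SimpleGraph.Walk.edges_transfer, Sym2.eq_swap]
    exact hsxyp
  have huvc : s(u, v) ∈ c.edges := by
    rw [hcdef, SimpleGraph.Walk.edges_cons, hp'def, SimpleGraph.Walk.edges_transfer]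
    exact List.mem_cons_of_mem _ huvmem
  set T' : SimpleGraph V := H \ SimpleGraph.fromEdgeSet {s(u, v)} with hT'def
  have hreach : T'.Reachable u v :=
    ((SimpleGraph.adj_and_reachable_delete_edges_iff_exists_cycle (G := H)).mpr
      ⟨y, c, hc, huvc⟩).2
  have hT'conn : T'.Connected := connected_sdiff_of_reachable hH hreach
  -- characterize adjacency in T'
  have hT'adj : ∀ a b : V, T'.Adj a b ↔
      (T.Adj a b ∨ ((a = x ∧ b = y) ∨ (a = y ∧ b = x))) ∧ s(a, b) ≠ s(u, v) := by
    intro a' b'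
    rw [hT'def, SimpleGraph.sdiff_adj, SimpleGraph.sup_adj, SimpleGraph.edge_adj,
      SimpleGraph.fromEdgeSet_adj]
    constructor
    · rintro ⟨h1, h2⟩
      have hne : a' ≠ b' := by
        rcases h1 with h1 | h1
        · exact h1.ne
        · exact h1.2
      refine ⟨?_, fun h => h2 ⟨by simp [h], hne⟩⟩
      rcases h1 with h1 | h1
      · exact Or.inl h1
      · exact Or.inr h1.1
    · rintro ⟨h1, h2⟩
      have hne : a' ≠ b' := by
        rcases h1 with h1 | ⟨rfl, rfl⟩ | ⟨rfl, rfl⟩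
        · exact h1.ne
        · exact hxyne
        · exact hxyne.symm
      refine ⟨?_, fun h => h2 (by simpa using h.1)⟩
      rcases h1 with h1 | h1
      · exact Or.inl h1
      · exact Or.inr ⟨h1, hne⟩
  -- acyclicity of T'
  have hT'ac : T'.IsAcyclic := by
    intro z c0 hc0
    by_cases hxy0 : s(x, y) ∈ c0.edges
    · have h2 := ((SimpleGraph.adj_and_reachable_delete_edges_iff_exists_cycle
        (G := T')).mpr ⟨z, c0, hc0, hxy0⟩).2
      obtain ⟨q0⟩ := h2
      have hsub : ∀ e ∈ q0.edges, e ∈ T.edgeSet ∧ e ≠ s(u, v) := by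
        intro e he
        have h1 := q0.edges_subset_edgeSet he
        induction e with
        | h a' b' =>
          rw [SimpleGraph.mem_edgeSet] at h1
          rw [SimpleGraph.deleteEdges_adj] at h1
          obtain ⟨h1, h3⟩ := h1
          rw [hT'adj] at h1
          obtain ⟨h1, h4⟩ := h1
          have hne : a' ≠ b' := by
            rcases h1 with h1 | ⟨rfl, rfl⟩ | ⟨rfl, rfl⟩
            · exact h1.ne
            · exact hxyne
            · exact hxyne.symm
          have hnxy : s(a', b') ≠ s(x, y) := fun h => h3 (by simp [h])
          rcases h1 with h1 | ⟨rfl, rfl⟩ | ⟨rfl, rfl⟩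
          · exact ⟨h1, h4⟩
          · exact absurd rfl hnxy
          · exact absurd (Sym2.eq_swap) hnxy
      have hmem := hall (q0.transfer T (fun e he => (hsub e he).1))
      rw [SimpleGraph.Walk.edges_transfer] at hmem
      exact (hsub _ hmem).2 rfl
    · have hsub : ∀ e ∈ c0.edges, e ∈ T.edgeSet := by
        intro e he
        have h1 := c0.edges_subset_edgeSet he
        have hexy : e ≠ s(x, y) := fun h => hxy0 (h ▸ he)
        induction e with
        | h a' b' =>
          rw [SimpleGraph.mem_edgeSet] at h1 ⊢
          rw [hT'adj] at h1
          obtain ⟨h1, -⟩ := h1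
          rcases h1 with h1 | ⟨rfl, rfl⟩ | ⟨rfl, rfl⟩
          · exact h1
          · exact absurd rfl hexy
          · exact absurd (Sym2.eq_swap) hexy
      exact hT.IsAcyclic (c0.transfer T hsub) (hc0.transfer hsub)
  have hT'G : T' ≤ G := by
    intro a' b' hab
    rw [hT'adj] at hab
    rcases hab.1 with h1 | ⟨rfl, rfl⟩ | ⟨rfl, rfl⟩
    · exact hTG h1
    · exact hxyG
    · exact hxyG.symm
  have hle := hmax T' hT'G ⟨hT'conn, hT'ac⟩
  -- weight computation
  have hne1 : ((x, y) : V × V) ≠ (u, v) := by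
    intro h
    injection h with h1 h2
    exact hsne (by rw [h1, h2])
  have hne2 : ((x, y) : V × V) ≠ (v, u) := by
    intro h
    injection h with h1 h2
    exact hsne (by rw [h1, h2, Sym2.eq_swap])
  have hne3 : ((y, x) : V × V) ≠ (u, v) := by
    intro h
    injection h with h1 h2
    exact hsne (by rw [← h1, ← h2, Sym2.eq_swap])
  have hne4 : ((y, x) : V × V) ≠ (v, u) := by
    intro h
    injection h with h1 h2
    exact hsne (by rw [← h2, ← h1])
  have key : ∀ a' b' : V,
      (@ite ℝ (T'.Adj a' b') (Classical.propDecidable _) (w s(a', b')) 0) =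
      (if T.Adj a' b' then w s(a', b') else 0)
      + (if (a', b') = (x, y) ∨ (a', b') = (y, x) then w s(x, y) else 0)
      - (if (a', b') = (u, v) ∨ (a', b') = (v, u) then w s(u, v) else 0) := by
    intro a' b'
    by_cases h1 : a' = x ∧ b' = y
    · obtain ⟨rfl, rfl⟩ := h1
      have hadj : T'.Adj a' b' := (hT'adj a' b').mpr ⟨Or.inr (Or.inl ⟨rfl, rfl⟩), hsne.symm⟩
      simp [hadj, hTxy, hne1, hne2]
    by_cases h2 : a' = y ∧ b' = x
    · obtain ⟨rfl, rfl⟩ := h2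
      have hadj : T'.Adj a' b' := (hT'adj a' b').mpr
        ⟨Or.inr (Or.inr ⟨rfl, rfl⟩), fun h => hsne (by rw [← h]; exact Sym2.eq_swap)⟩
      have hTyx : ¬T.Adj a' b' := fun h => hTxy h.symm
      have hsw : s(a', b') = s(b', a') := Sym2.eq_swap
      simp [hadj, hTyx, hne3, hne4, hsw]
    by_cases h3 : a' = u ∧ b' = v
    · obtain ⟨rfl, rfl⟩ := h3
      have hnT' : ¬T'.Adj a' b' := fun h => ((hT'adj _ _).mp h).2 rfl
      simp [hnT', hTuv, Ne.symm hne1, Ne.symm hne3]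
    by_cases h4 : a' = v ∧ b' = u
    · obtain ⟨rfl, rfl⟩ := h4
      have hnT' : ¬T'.Adj a' b' := fun h => ((hT'adj _ _).mp h).2 Sym2.eq_swap
      have hsw : s(a', b') = s(b', a') := Sym2.eq_swap
      simp [hnT', hTuv.symm, Ne.symm hne2, Ne.symm hne4, hsw]
    · have hs1 : s(a', b') ≠ s(u, v) := by
        intro h
        rcases Sym2.eq_iff.mp h with ⟨rfl, rfl⟩ | ⟨rfl, rfl⟩
        · exact h3 ⟨rfl, rfl⟩
        · exact h4 ⟨rfl, rfl⟩
      have hiff : T'.Adj a' b' ↔ T.Adj a' b' := by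
        rw [hT'adj]
        constructor
        · rintro ⟨h | ⟨rfl, rfl⟩ | ⟨rfl, rfl⟩, -⟩
          · exact h
          · exact absurd ⟨rfl, rfl⟩ h1
          · exact absurd ⟨rfl, rfl⟩ h2
        · intro h
          exact ⟨Or.inl h, hs1⟩
      simp [hiff, h1, h2, h3, h4, Prod.ext_iff]
  have hTW : totalWeight T' w = totalWeight T w + 2 * w s(x, y) - 2 * w s(u, v) := by
    rw [totalWeight, totalWeight]
    simp only [key]
    rw [← pair_sum_eq (w s(x, y)) (x, y) (y, x) (by simp [hxyne]),
      ← pair_sum_eq (w s(u, v)) (u, v) (v, u) (by simp [hTuv.ne])]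
    rw [← Finset.sum_add_distrib, ← Finset.sum_sub_distrib]
    refine Finset.sum_congr rfl fun a' _ => ?_
    rw [← Finset.sum_add_distrib, ← Finset.sum_sub_distrib]
  rw [hTW] at hle
  linarith
end

section
/- Let G be a connected simple graph on a finite vertex set V with edge weights w, and let T be a maximum-weight spanning tree of G. Then for every threshold θ ∈ ℝ and all vertices u, v ∈ V: u and v are joined by a path in T using only tree edges of weight ≥ θ if and only if u and v are joined by a path in G using only edges of weight ≥ θ. Equivalently, for every θ the spanning subgraph of T with edge set {e ∈ T : w(e) ≥ θ} has the same connected components as the spanning subgraph of G with edge set {e ∈ G : w(e) ≥ θ}. -/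
open Finset

attribute [local instance] Classical.propDecidable

lemma sum_ite_sym2 {V : Type} [Fintype V] (a b : V) (hab : a ≠ b) (c : ℝ) :
    (∑ u : V, ∑ v : V, if s(u, v) = s(a, b) then c else 0) = 2 * c := by
  classical
  have h : ∀ u v : V, (if s(u, v) = s(a, b) then c else 0) =
      (if u = a then (if v = b then c else 0) else 0) +
      (if u = b then (if v = a then c else 0) else 0) := by
    intro u v
    by_cases h1 : u = a <;> by_cases h2 : v = b <;> by_cases h3 : u = b <;>
      by_cases h4 : v = a <;> simp_all [Sym2.eq_iff]
  simp_rw [h, Finset.sum_add_distrib]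
  simp [Finset.sum_ite_eq', hab]
  ring

/-- On any path witnessing a failure of thresholded reachability, there is a first edge
where reachability from the start breaks, and the rest of the path avoids that edge. -/
lemma exists_breaking_edge {V : Type} (T : SimpleGraph V) (w : Sym2 V → ℝ) (θ : ℝ) :
    ∀ (a b : V) (p : T.Walk a b), p.IsPath →
      ¬ (T.deleteEdges {e | w e < θ}).Reachable a b →
      ∃ x y, T.Adj x y ∧ (T.deleteEdges {e | w e < θ}).Reachable a x ∧
        ¬ (T.deleteEdges {e | w e < θ}).Reachable a y ∧
        ∃ r : T.Walk y b, s(x, y) ∉ r.edges := by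
  intro a b p
  induction p with
  | nil => exact fun _ h => absurd (SimpleGraph.Reachable.refl _) h
  | @cons a c b h q ih =>
    intro hp hnab
    by_cases hac : (T.deleteEdges {e | w e < θ}).Reachable a c
    · have hncb : ¬ (T.deleteEdges {e | w e < θ}).Reachable c b :=
        fun h' => hnab (hac.trans h')
      obtain ⟨x, y, hxy, hcx, hncy, r, hr⟩ := ih hp.of_cons hncb
      exact ⟨x, y, hxy, hac.trans hcx, fun h' => hncy (hac.symm.trans h'), r, hr⟩
    · refine ⟨a, c, h, SimpleGraph.Reachable.refl _, hac, q, fun he => ?_⟩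
      have : a ∈ q.support := SimpleGraph.Walk.fst_mem_support_of_mem_edges q he
      rw [SimpleGraph.Walk.cons_isPath_iff] at hp
      exact hp.2 this

/-- Key exchange lemma: every `G`-edge of weight `≥ θ` has its endpoints joined in the
thresholded tree. -/
lemma key_exchange {V : Type} [Fintype V]
    (G : SimpleGraph V) (w : Sym2 V → ℝ)
    (T : SimpleGraph V) (hTG : T ≤ G) (hT : T.IsTree)
    (hmax : ∀ T' : SimpleGraph V, T' ≤ G → T'.IsTree → totalWeight T' w ≤ totalWeight T w)
    (θ : ℝ) {a b : V} (hab : G.Adj a b) (hw : θ ≤ w s(a, b)) :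
    (T.deleteEdges {e | w e < θ}).Reachable a b := by
  by_contra hnab
  have hne : a ≠ b := hab.ne
  have hTab : ¬ T.Adj a b := by
    intro h
    exact hnab (SimpleGraph.Adj.reachable
      (SimpleGraph.deleteEdges_adj.2 ⟨h, not_lt.2 hw⟩))
  obtain ⟨p0⟩ := hT.1.preconnected a b
  obtain ⟨x, y, hxy, hax0, hnay, r, hr⟩ :=
    exists_breaking_edge T w θ a b p0.toPath (p0.toPath.2) hnab
  have hwxy : w s(x, y) < θ := by
    by_contra hge
    exact hnay (hax0.trans (SimpleGraph.Adj.reachable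
      (SimpleGraph.deleteEdges_adj.2 ⟨hxy, not_lt.2 (not_lt.1 hge)⟩)))
  have hxyne : x ≠ y := hxy.ne
  have hABne : s(a, b) ≠ s(x, y) := fun h => absurd hw (by rw [h]; exact not_le.2 hwxy)
  set T' := T.deleteEdges {s(x, y)} with hT'def
  have hsub : T.deleteEdges {e | w e < θ} ≤ T' :=
    SimpleGraph.deleteEdges_anti (Set.singleton_subset_iff.2 hwxy)
  have hax : T'.Reachable a x := hax0.mono hsub
  have hyb : T'.Reachable y b :=
    ⟨r.toDeleteEdges _ (fun e he hmem => hr (Set.mem_singleton_iff.1 hmem ▸ he))⟩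
  have hbridge : ¬ T'.Reachable x y :=
    (SimpleGraph.isBridge_iff.1 ((SimpleGraph.isAcyclic_iff_forall_adj_isBridge.1 hT.2) hxy))
  have hside' : ∀ (u z : V) (q : T.Walk u z),
      (T'.Reachable z x ∨ T'.Reachable z y) → (T'.Reachable u x ∨ T'.Reachable u y) := by
    intro u z q
    induction q with
    | nil => exact id
    | @cons u c z h q ih =>
      intro hz
      have hc := ih hz
      by_cases he : s(u, c) = s(x, y)
      · rcases Sym2.eq_iff.1 he with ⟨rfl, rfl⟩ | ⟨rfl, rfl⟩
        · exact Or.inl (SimpleGraph.Reachable.refl _)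
        · exact Or.inr (SimpleGraph.Reachable.refl _)
      · have hadj : T'.Adj u c :=
          SimpleGraph.deleteEdges_adj.2 ⟨h, by simpa using he⟩
        rcases hc with h' | h'
        · exact Or.inl (hadj.reachable.trans h')
        · exact Or.inr (hadj.reachable.trans h')
  have hside : ∀ v : V, T'.Reachable v x ∨ T'.Reachable v y := by
    intro v
    obtain ⟨q⟩ := hT.1.preconnected v x
    exact hside' v x q (Or.inl (SimpleGraph.Reachable.refl x))
  set T'' := T' ⊔ SimpleGraph.fromEdgeSet {s(a, b)} with hT''def
  have habT'' : T''.Adj a b :=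
    (SimpleGraph.sup_adj _ _ _ _).2 (Or.inr ((SimpleGraph.fromEdgeSet_adj _).2 ⟨rfl, hne⟩))
  have hT'le : T' ≤ T'' := le_sup_left
  have hT''G : T'' ≤ G := by
    refine sup_le ((SimpleGraph.deleteEdges_le _).trans hTG) ?_
    intro u v huv
    obtain ⟨he, hne'⟩ := (SimpleGraph.fromEdgeSet_adj _).1 huv
    rcases Sym2.eq_iff.1 (Set.mem_singleton_iff.1 he) with ⟨rfl, rfl⟩ | ⟨rfl, rfl⟩
    · exact hab
    · exact hab.symm
  have hxyT'' : T''.Reachable x y :=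
    ((hax.symm.mono hT'le).trans habT''.reachable).trans (hyb.mono hT'le).symm
  have hallx : ∀ z : V, T''.Reachable z x := by
    intro z
    rcases hside z with h | h
    · exact h.mono hT'le
    · exact (h.mono hT'le).trans hxyT''.symm
  have hconn : T''.Connected := by
    rw [SimpleGraph.connected_iff]
    exact ⟨fun u v => (hallx u).trans (hallx v).symm, ⟨a⟩⟩
  have hacy : T''.IsAcyclic := by
    intro v c hc
    by_cases he : s(a, b) ∈ c.edges
    · have hnb : ¬ T''.IsBridge s(a, b) := by
        rw [SimpleGraph.isBridge_iff_adj_and_forall_cycle_notMem ((SimpleGraph.mem_edgeSet _).2 habT'')]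
        intro h2
        exact h2 c hc he
      rw [SimpleGraph.isBridge_iff] at hnb
      push_neg at hnb
      have hreach := hnb
      have hle : T'' \ SimpleGraph.fromEdgeSet {s(a, b)} ≤ T' := by
        intro u v huv
        obtain ⟨h1, h2⟩ := huv
        rcases (SimpleGraph.sup_adj _ _ _ _).1 h1 with h3 | h3
        · exact h3
        · exact absurd h3 h2
      exact hbridge (hax.symm.trans ((hreach.mono hle).trans hyb.symm))
    · have hedges : ∀ e ∈ c.edges, e ∈ T.edgeSet := by
        intro e hec
        have hmem := c.edges_subset_edgeSet hec
        rw [hT''def, SimpleGraph.edgeSet_sup] at hmem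
        rcases hmem with hmem | hmem
        · exact SimpleGraph.edgeSet_mono (SimpleGraph.deleteEdges_le _) hmem
        · rw [SimpleGraph.edgeSet_fromEdgeSet] at hmem
          exact absurd (Set.mem_singleton_iff.1 hmem.1 ▸ hec) he
      exact hT.2 (c.transfer T hedges) (hc.transfer hedges)
  have hT''tree : T''.IsTree := ⟨hconn, hacy⟩
  have hAdj'' : ∀ u v : V, T''.Adj u v ↔ (T.Adj u v ∧ s(u, v) ≠ s(x, y)) ∨ s(u, v) = s(a, b) := by
    intro u v
    constructor
    · intro h
      rcases (SimpleGraph.sup_adj _ _ _ _).1 h with h | h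
      · obtain ⟨h1, h2⟩ := SimpleGraph.deleteEdges_adj.1 h
        exact Or.inl ⟨h1, by simpa using h2⟩
      · exact Or.inr (Set.mem_singleton_iff.1 ((SimpleGraph.fromEdgeSet_adj _).1 h).1)
    · rintro (⟨h1, h2⟩ | h)
      · exact (SimpleGraph.sup_adj _ _ _ _).2 (Or.inl (SimpleGraph.deleteEdges_adj.2 ⟨h1, by simpa using h2⟩))
      · refine (SimpleGraph.sup_adj _ _ _ _).2 (Or.inr ((SimpleGraph.fromEdgeSet_adj _).2 ⟨by simp [h], ?_⟩))
        rcases Sym2.eq_iff.1 h with ⟨rfl, rfl⟩ | ⟨rfl, rfl⟩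
        · exact hne
        · exact hne.symm
  have hterm : ∀ u v : V, (@ite ℝ (T''.Adj u v) (Classical.propDecidable _) (w s(u, v)) 0) =
      (@ite ℝ (T.Adj u v) (Classical.propDecidable _) (w s(u, v)) 0)
        + (if s(u, v) = s(a, b) then w s(a, b) else 0)
        - (if s(u, v) = s(x, y) then w s(x, y) else 0) := by
    intro u v
    by_cases hA : s(u, v) = s(a, b)
    · have hP : ¬ T.Adj u v := by
        rcases Sym2.eq_iff.1 hA with ⟨rfl, rfl⟩ | ⟨rfl, rfl⟩
        · exact hTab
        · exact fun h => hTab h.symm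
      have hX : s(u, v) ≠ s(x, y) := hA ▸ hABne
      rw [if_pos ((hAdj'' u v).2 (Or.inr hA)), if_neg hP, if_pos hA, if_neg hX, hA]
      ring
    · by_cases hX : s(u, v) = s(x, y)
      · have hP : T.Adj u v := by
          rcases Sym2.eq_iff.1 hX with ⟨rfl, rfl⟩ | ⟨rfl, rfl⟩
          · exact hxy
          · exact hxy.symm
        have hnA'' : ¬ T''.Adj u v := by
          rw [hAdj'']
          rintro (⟨-, h2⟩ | h2)
          · exact h2 hX
          · exact hA h2
        rw [if_neg hnA'', if_pos hP, if_neg hA, if_pos hX, hX]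
        ring
      · have hiff : T''.Adj u v ↔ T.Adj u v := by
          rw [hAdj'']
          tauto
        rw [if_neg hA, if_neg hX]
        by_cases hP : T.Adj u v
        · rw [if_pos (hiff.2 hP), if_pos hP]; ring
        · rw [if_neg (fun h => hP (hiff.1 h)), if_neg hP]; ring
  have hcalc : totalWeight T'' w = totalWeight T w + 2 * w s(a, b) - 2 * w s(x, y) := by
    unfold totalWeight
    refine Eq.trans (Finset.sum_congr rfl fun u _ => Finset.sum_congr rfl fun v _ => hterm u v) ?_
    simp_rw [Finset.sum_sub_distrib, Finset.sum_add_distrib]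
    rw [sum_ite_sym2 a b hne, sum_ite_sym2 x y hxyne]
  have hlt : totalWeight T w < totalWeight T'' w := by
    rw [hcalc]; linarith
  linarith [hmax T'' hT''G hT''tree]

/-- Bottleneck property of maximum-weight spanning trees: for every threshold `θ`, two
vertices are joined by a path of tree edges of weight `≥ θ` iff they are joined by a path of
`G`-edges of weight `≥ θ`; i.e., the subgraphs of `T` and of `G` keeping only the edges of
weight `≥ θ` have the same connected components. -/
theorem max_spanning_tree_bottleneck {V : Type} [Fintype V]
    (G : SimpleGraph V) (hG : G.Connected) (w : Sym2 V → ℝ)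
    (T : SimpleGraph V) (hTG : T ≤ G) (hT : T.IsTree)
    (hmax : ∀ T' : SimpleGraph V, T' ≤ G → T'.IsTree → totalWeight T' w ≤ totalWeight T w) :
    ∀ (θ : ℝ) (u v : V),
      (T.deleteEdges {e | w e < θ}).Reachable u v ↔
        (G.deleteEdges {e | w e < θ}).Reachable u v := by
  intro θ u v
  constructor
  · exact fun h => h.mono (SimpleGraph.deleteEdges_mono hTG)
  · intro h
    obtain ⟨p⟩ := h
    induction p with
    | nil => exact SimpleGraph.Reachable.refl _
    | @cons u c v h' q ih =>
      obtain ⟨hG', hw'⟩ := SimpleGraph.deleteEdges_adj.1 h'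
      exact (key_exchange G w T hTG hT hmax θ hG' (not_lt.1 hw')).trans ih
end
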